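/- arXiv:2210.00194 — 2 statements merged into one kernel-verified Lean document; each statement's English description precedes it below -/
import Mathlib

section
/- For convex bodies K and C in ℝ^n and λ ∈ (0,1), one has V((1-λ)K + λC) ≥ V(K)^(1-λ) · V(C)^λ. -/
open MeasureTheory Set
open scoped Pointwise ENNReal


lemma geom_le_arith (a b : ℝ≥0∞) {p q : ℝ} (hp : 0 < p) (hq : 0 < q) (hpq : p + q = 1) :
    a ^ p * b ^ q ≤ ENNReal.ofReal p * a + ENNReal.ofReal q * b := by
  rcases eq_or_ne a 0 with rfl | ha0
  · simp [ENNReal.zero_rpow_of_pos hp]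
  rcases eq_or_ne b 0 with rfl | hb0
  · simp [ENNReal.zero_rpow_of_pos hq]
  rcases eq_or_ne a ⊤ with rfl | haT
  · have : ENNReal.ofReal p * ⊤ = ⊤ := by
      simp [ENNReal.mul_top, (ENNReal.ofReal_pos.2 hp).ne']
    rw [this]
    exact le_top.trans (le_add_right le_rfl)
  rcases eq_or_ne b ⊤ with rfl | hbT
  · have : ENNReal.ofReal q * ⊤ = ⊤ := by
      simp [ENNReal.mul_top, (ENNReal.ofReal_pos.2 hq).ne']
    rw [this]
    exact le_top.trans (le_add_left le_rfl)
  -- finite case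
  rw [← ENNReal.ofReal_toReal haT, ← ENNReal.ofReal_toReal hbT]
  have hat : 0 ≤ a.toReal := ENNReal.toReal_nonneg
  have hbt : 0 ≤ b.toReal := ENNReal.toReal_nonneg
  rw [ENNReal.ofReal_rpow_of_pos (ENNReal.toReal_pos ha0 haT),
    ENNReal.ofReal_rpow_of_pos (ENNReal.toReal_pos hb0 hbT),
    ← ENNReal.ofReal_mul (Real.rpow_nonneg hat p),
    ← ENNReal.ofReal_mul hp.le, ← ENNReal.ofReal_mul hq.le,
    ← ENNReal.ofReal_add (by positivity) (by positivity)]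
  exact ENNReal.ofReal_le_ofReal
    (Real.geom_mean_le_arith_mean2_weighted hp.le hq.le hat hbt hpq)

lemma vol_add_compact {A B : Set ℝ} (hA : IsCompact A) (hB : IsCompact B)
    (h1 : A.Nonempty) (h2 : B.Nonempty) : volume A + volume B ≤ volume (A + B) := by
  set a := sSup A with ha_def
  set b := sInf B with hb_def
  have ha : a ∈ A := hA.sSup_mem h1
  have hb : b ∈ B := hB.sInf_mem h2
  set A' : Set ℝ := (fun x => x + b) '' A with hA'def
  set B' : Set ℝ := (fun y => a + y) '' B with hB'def
  have hA'eq : A' = (fun x => x + (-b)) ⁻¹' A := by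
    ext x; simp [hA'def, eq_comm, ← sub_eq_iff_eq_add, sub_eq_add_neg]
  have hB'eq : B' = (fun y => (-a) + y) ⁻¹' B := by
    ext x; constructor
    · rintro ⟨y, hy, rfl⟩; simpa using hy
    · intro hx; exact ⟨-a + x, hx, by ring⟩
  have volA' : volume A' = volume A := by
    rw [hA'eq]; exact measure_preimage_add_right volume (-b) A
  have volB' : volume B' = volume B := by
    rw [hB'eq]; exact measure_preimage_add volume (-a) B
  have hA'sub : A' ⊆ A + B := by
    rintro x ⟨y, hy, rfl⟩; exact add_mem_add hy hb
  have hB'sub : B' ⊆ A + B := by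
    rintro x ⟨y, hy, rfl⟩; exact add_mem_add ha hy
  have hA'le : ∀ x ∈ A', x ≤ a + b := by
    rintro x ⟨y, hy, rfl⟩
    exact add_le_add_left (le_csSup hA.bddAbove hy) b
  have hB'ge : ∀ x ∈ B', a + b ≤ x := by
    rintro x ⟨y, hy, rfl⟩
    exact add_le_add_right (csInf_le hB.bddBelow hy) a
  have hmA' : MeasurableSet A' :=
    ((hA.image (continuous_id.add continuous_const)).isClosed).measurableSet
  have hmB' : MeasurableSet B' :=
    ((hB.image (continuous_const.add continuous_id)).isClosed).measurableSet
  have hdisj : Disjoint (A' \ {a + b}) B' := by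
    rw [Set.disjoint_left]
    rintro x ⟨hx1, hx2⟩ hx3
    exact hx2 (le_antisymm (hA'le x hx1) (hB'ge x hx3))
  calc volume A + volume B = volume (A' \ {a + b}) + volume B' := by
        rw [← volA', ← volB', measure_diff_null (measure_singleton _)]
    _ = volume ((A' \ {a + b}) ∪ B') :=
        (measure_union hdisj hmB').symm
    _ ≤ volume (A + B) := by
        apply measure_mono
        exact Set.union_subset ((Set.diff_subset).trans hA'sub) hB'sub

lemma vol_add_meas {A B : Set ℝ} (hA : MeasurableSet A) (hB : MeasurableSet B)
    (h1 : A.Nonempty) (h2 : B.Nonempty) : volume A + volume B ≤ volume (A + B) := by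
  obtain ⟨xa, hxa⟩ := h1
  obtain ⟨xb, hxb⟩ := h2
  have eqA : volume A = ⨆ K : {K : Set ℝ // K ⊆ A ∧ IsCompact K}, volume K.1 := by
    rw [hA.measure_eq_iSup_isCompact volume]
    simp_rw [iSup_and']
    exact iSup_subtype'
  have eqB : volume B = ⨆ K : {K : Set ℝ // K ⊆ B ∧ IsCompact K}, volume K.1 := by
    rw [hB.measure_eq_iSup_isCompact volume]
    simp_rw [iSup_and']
    exact iSup_subtype'
  rw [eqA, eqB]
  have : Nonempty {K : Set ℝ // K ⊆ A ∧ IsCompact K} :=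
    ⟨⟨∅, empty_subset _, isCompact_empty⟩⟩
  have : Nonempty {K : Set ℝ // K ⊆ B ∧ IsCompact K} :=
    ⟨⟨∅, empty_subset _, isCompact_empty⟩⟩
  refine ENNReal.iSup_add_iSup_le fun K L => ?_
  set K' : Set ℝ := K.1 ∪ {xa} with hK'
  set L' : Set ℝ := L.1 ∪ {xb} with hL'
  have hK'c : IsCompact K' := K.2.2.union isCompact_singleton
  have hL'c : IsCompact L' := L.2.2.union isCompact_singleton
  have hK'A : K' ⊆ A := union_subset K.2.1 (by simpa using hxa)
  have hL'B : L' ⊆ B := union_subset L.2.1 (by simpa using hxb)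
  calc volume K.1 + volume L.1 ≤ volume K' + volume L' := by
        gcongr <;> [exact subset_union_left; exact subset_union_left]
    _ ≤ volume (K' + L') :=
        vol_add_compact hK'c hL'c ⟨xa, by simp [hK']⟩ ⟨xb, by simp [hL']⟩
    _ ≤ volume (A + B) := measure_mono (add_subset_add hK'A hL'B)

/-- Layer cake for an ENNReal function bounded by 1. -/
lemma layercake_le_one {f : ℝ → ℝ≥0∞} (hf : Measurable f) (hb : ∀ x, f x ≤ 1) :
    ∫⁻ x, f x = ∫⁻ t in Ioo (0:ℝ) 1, volume {x | ENNReal.ofReal t < f x} := by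
  have hfT : ∀ x, f x ≠ ⊤ := fun x => ((hb x).trans_lt ENNReal.one_lt_top).ne
  have key : ∫⁻ x, f x = ∫⁻ t in Ioi (0:ℝ), volume {x | ENNReal.ofReal t < f x} := by
    have h1 : ∫⁻ x, f x = ∫⁻ x, ENNReal.ofReal ((f x).toReal) := by
      congr 1; funext x; rw [ENNReal.ofReal_toReal (hfT x)]
    rw [h1, lintegral_eq_lintegral_meas_lt volume
      (Filter.Eventually.of_forall fun x => ENNReal.toReal_nonneg)
      (hf.ennreal_toReal.aemeasurable)]
    refine setLIntegral_congr_fun measurableSet_Ioi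
      (fun t ht => ?_)
    congr 1; ext x
    simp only [mem_setOf_eq]
    rw [ENNReal.ofReal_lt_iff_lt_toReal (le_of_lt ht) (hfT x)]
  rw [key]
  have hsplit : Ioi (0:ℝ) = Ioo (0:ℝ) 1 ∪ Ici (1:ℝ) := by
    ext t; simp only [mem_Ioi, mem_union, mem_Ioo, mem_Ici]
    constructor
    · intro h; rcases lt_or_ge t 1 with h1 | h1
      · exact Or.inl ⟨h, h1⟩
      · exact Or.inr h1
    · rintro (⟨h, _⟩ | h) <;> linarith
  rw [hsplit, lintegral_union measurableSet_Ici (by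
    rw [Set.disjoint_left]; rintro t ⟨_, ht1⟩ ht2
    exact absurd (mem_Ici.1 ht2) (not_le.2 ht1))]
  have hzero : ∫⁻ t in Ici (1:ℝ), volume {x | ENNReal.ofReal t < f x} = 0 := by
    have : ∀ t ∈ Ici (1:ℝ), volume {x | ENNReal.ofReal t < f x} = (0:ℝ≥0∞) := by
      intro t ht
      have : {x | ENNReal.ofReal t < f x} = ∅ := by
        ext x; simp only [mem_setOf_eq, mem_empty_iff_false, iff_false, not_lt]
        exact (hb x).trans (ENNReal.one_le_ofReal.2 ht)
      rw [this, measure_empty]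
    calc ∫⁻ t in Ici (1:ℝ), volume {x | ENNReal.ofReal t < f x}
        = ∫⁻ _ in Ici (1:ℝ), (0:ℝ≥0∞) :=
          setLIntegral_congr_fun measurableSet_Ici this
      _ = 0 := lintegral_zero
  rw [hzero, add_zero]

lemma dim1_core {p q : ℝ} (hp : 0 < p) (hq : 0 < q) (hpq : p + q = 1)
    (f g h : ℝ → ℝ≥0∞) (hf : Measurable f) (hg : Measurable g) (hh : Measurable h)
    (hyp : ∀ x y, f x ^ p * g y ^ q ≤ h (p * x + q * y))
    (hf1 : ∀ x, f x ≤ 1) (hg1 : ∀ x, g x ≤ 1)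
    (hsf : ⨆ x, f x = 1) (hsg : ⨆ x, g x = 1) :
    ENNReal.ofReal p * (∫⁻ x, f x) + ENNReal.ofReal q * (∫⁻ x, g x) ≤ ∫⁻ x, h x := by
  set A : ℝ → Set ℝ := fun t => {x | ENNReal.ofReal t < f x} with hA
  set B : ℝ → Set ℝ := fun t => {x | ENNReal.ofReal t < g x} with hB
  have hmA : ∀ t, MeasurableSet (A t) := fun t => hf measurableSet_Ioi
  have hmB : ∀ t, MeasurableSet (B t) := fun t => hg measurableSet_Ioi
  have key : ∀ t ∈ Ioo (0:ℝ) 1,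
      ENNReal.ofReal p * volume (A t) + ENNReal.ofReal q * volume (B t) ≤
        volume {x | ENNReal.ofReal t < h x} := by
    intro t ht
    have ht1 : ENNReal.ofReal t < 1 := ENNReal.ofReal_lt_one.2 ht.2
    have hAne : (A t).Nonempty := by
      have : ENNReal.ofReal t < ⨆ x, f x := hsf ▸ ht1
      obtain ⟨x, hx⟩ := lt_iSup_iff.1 this
      exact ⟨x, hx⟩
    have hBne : (B t).Nonempty := by
      have : ENNReal.ofReal t < ⨆ x, g x := hsg ▸ ht1
      obtain ⟨x, hx⟩ := lt_iSup_iff.1 this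
      exact ⟨x, hx⟩
    have hsub : p • A t + q • B t ⊆ {x | ENNReal.ofReal t < h x} := by
      rintro z ⟨u, hu, v, hv, rfl⟩
      obtain ⟨x, hx, rfl⟩ := hu
      obtain ⟨y, hy, rfl⟩ := hv
      simp only [smul_eq_mul, mem_setOf_eq]
      calc ENNReal.ofReal t = ENNReal.ofReal t ^ (p + q) := by rw [hpq, ENNReal.rpow_one]
        _ = ENNReal.ofReal t ^ p * ENNReal.ofReal t ^ q :=
            ENNReal.rpow_add _ _ (ENNReal.ofReal_pos.2 ht.1).ne' ENNReal.ofReal_ne_top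
        _ < f x ^ p * g y ^ q :=
            ENNReal.mul_lt_mul (ENNReal.rpow_lt_rpow hx hp) (ENNReal.rpow_lt_rpow hy hq)
        _ ≤ h (p * x + q * y) := hyp x y
    have hmsA : MeasurableSet (p • A t) := by
      have : p • A t = (fun x : ℝ => p⁻¹ • x) ⁻¹' A t := by
        ext x; rw [Set.mem_preimage, Set.mem_smul_set_iff_inv_smul_mem₀ hp.ne']
      rw [this]
      exact (measurable_const_smul _) (hmA t)
    have hmsB : MeasurableSet (q • B t) := by
      have : q • B t = (fun x : ℝ => q⁻¹ • x) ⁻¹' B t := by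
        ext x; rw [Set.mem_preimage, Set.mem_smul_set_iff_inv_smul_mem₀ hq.ne']
      rw [this]
      exact (measurable_const_smul _) (hmB t)
    have volsA : volume (p • A t) = ENNReal.ofReal p * volume (A t) := by
      rw [Measure.addHaar_smul volume p (A t)]
      congr 2
      rw [Module.finrank_self, pow_one, abs_of_pos hp]
    have volsB : volume (q • B t) = ENNReal.ofReal q * volume (B t) := by
      rw [Measure.addHaar_smul volume q (B t)]
      congr 2
      rw [Module.finrank_self, pow_one, abs_of_pos hq]
    calc ENNReal.ofReal p * volume (A t) + ENNReal.ofReal q * volume (B t)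
        = volume (p • A t) + volume (q • B t) := by rw [volsA, volsB]
      _ ≤ volume (p • A t + q • B t) :=
          vol_add_meas hmsA hmsB (hAne.smul_set) (hBne.smul_set)
      _ ≤ volume {x | ENNReal.ofReal t < h x} := measure_mono hsub
  -- measurability in t
  have hantA : Antitone fun t => volume (A t) := by
    intro s t hst
    exact measure_mono fun x hx => lt_of_le_of_lt (ENNReal.ofReal_le_ofReal hst) hx
  have hantB : Antitone fun t => volume (B t) := by
    intro s t hst
    exact measure_mono fun x hx => lt_of_le_of_lt (ENNReal.ofReal_le_ofReal hst) hx
  -- upper bound for ∫ h via truncation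
  set h'' : ℝ → ℝ≥0∞ := fun x => min (h x) 1 with hh''
  have hct : ∀ t ∈ Ioo (0:ℝ) 1,
      {x | ENNReal.ofReal t < h x} = {x | ENNReal.ofReal t < h'' x} := by
    intro t ht
    ext x
    simp only [mem_setOf_eq, hh'', lt_min_iff, iff_self_and]
    intro _; exact ENNReal.ofReal_lt_one.2 ht.2
  calc ENNReal.ofReal p * (∫⁻ x, f x) + ENNReal.ofReal q * (∫⁻ x, g x)
      = ∫⁻ t in Ioo (0:ℝ) 1,
          (ENNReal.ofReal p * volume (A t) + ENNReal.ofReal q * volume (B t)) := by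
        rw [layercake_le_one hf hf1, layercake_le_one hg hg1,
          lintegral_add_left (hantA.measurable.const_mul _),
          lintegral_const_mul _ hantA.measurable, lintegral_const_mul _ hantB.measurable]
    _ ≤ ∫⁻ t in Ioo (0:ℝ) 1, volume {x | ENNReal.ofReal t < h x} :=
        setLIntegral_mono
          (Antitone.measurable (fun s t hst => measure_mono fun x hx =>
            lt_of_le_of_lt (ENNReal.ofReal_le_ofReal hst) hx)) key
    _ = ∫⁻ t in Ioo (0:ℝ) 1, volume {x | ENNReal.ofReal t < h'' x} :=
        setLIntegral_congr_fun measurableSet_Ioo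
          (fun t ht => congrArg volume (hct t ht))
    _ = ∫⁻ x, h'' x := (layercake_le_one (by fun_prop) fun x => min_le_right _ _).symm
    _ ≤ ∫⁻ x, h x := lintegral_mono fun x => min_le_left _ _

lemma dim1_bounded {p q : ℝ} (hp : 0 < p) (hq : 0 < q) (hpq : p + q = 1)
    (f g h : ℝ → ℝ≥0∞) (hf : Measurable f) (hg : Measurable g) (hh : Measurable h)
    (hyp : ∀ x y, f x ^ p * g y ^ q ≤ h (p * x + q * y))
    (N M : ℝ≥0∞) (hN : N ≠ ⊤) (hM : M ≠ ⊤)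
    (hfN : ∀ x, f x ≤ N) (hgM : ∀ x, g x ≤ M) :
    (∫⁻ x, f x) ^ p * (∫⁻ x, g x) ^ q ≤ ∫⁻ x, h x := by
  by_cases hf0 : (∫⁻ x, f x) = 0
  · rw [hf0, ENNReal.zero_rpow_of_pos hp, zero_mul]; exact zero_le
  by_cases hg0 : (∫⁻ x, g x) = 0
  · rw [hg0, ENNReal.zero_rpow_of_pos hq, mul_zero]; exact zero_le
  set F := ⨆ x, f x with hFdef
  set G := ⨆ x, g x with hGdef
  have hFT : F ≠ ⊤ := ((iSup_le hfN).trans_lt hN.lt_top).ne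
  have hGT : G ≠ ⊤ := ((iSup_le hgM).trans_lt hM.lt_top).ne
  have hF0 : F ≠ 0 := by
    intro h0
    apply hf0
    have : f = fun _ => 0 := funext fun x => le_antisymm (h0 ▸ le_iSup f x) (zero_le)
    simp [this]
  have hG0 : G ≠ 0 := by
    intro h0
    apply hg0
    have : g = fun _ => 0 := funext fun x => le_antisymm (h0 ▸ le_iSup g x) (zero_le)
    simp [this]
  set D := F ^ p * G ^ q with hDdef
  have hD0 : D ≠ 0 :=
    mul_ne_zero (ENNReal.rpow_pos (pos_iff_ne_zero.2 hF0) hFT).ne'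
      (ENNReal.rpow_pos (pos_iff_ne_zero.2 hG0) hGT).ne'
  have hDT : D ≠ ⊤ := ENNReal.mul_ne_top
    (ENNReal.rpow_ne_top_of_nonneg hp.le hFT) (ENNReal.rpow_ne_top_of_nonneg hq.le hGT)
  have comp : ∀ a b : ℝ≥0∞, (F⁻¹ * a) ^ p * (G⁻¹ * b) ^ q = D⁻¹ * (a ^ p * b ^ q) := by
    intro a b
    rw [ENNReal.mul_rpow_of_nonneg _ _ hp.le, ENNReal.mul_rpow_of_nonneg _ _ hq.le,
      ENNReal.inv_rpow, ENNReal.inv_rpow, mul_mul_mul_comm,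
      ← ENNReal.mul_inv (Or.inl (ENNReal.rpow_pos (pos_iff_ne_zero.2 hF0) hFT).ne')
        (Or.inr (ENNReal.rpow_pos (pos_iff_ne_zero.2 hG0) hGT).ne')]
  set f' : ℝ → ℝ≥0∞ := fun x => F⁻¹ * f x with hf'def
  set g' : ℝ → ℝ≥0∞ := fun x => G⁻¹ * g x with hg'def
  set h' : ℝ → ℝ≥0∞ := fun x => D⁻¹ * h x with hh'def
  have hyp' : ∀ x y, f' x ^ p * g' y ^ q ≤ h' (p * x + q * y) := by
    intro x y
    rw [hf'def, hg'def, hh'def]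
    simp only
    rw [comp]
    exact mul_le_mul_right (hyp x y) _
  have hb1 : ∀ x, f' x ≤ 1 := by
    intro x
    calc F⁻¹ * f x ≤ F⁻¹ * F := mul_le_mul_right (le_iSup f x) _
      _ = 1 := ENNReal.inv_mul_cancel hF0 hFT
  have hb2 : ∀ x, g' x ≤ 1 := by
    intro x
    calc G⁻¹ * g x ≤ G⁻¹ * G := mul_le_mul_right (le_iSup g x) _
      _ = 1 := ENNReal.inv_mul_cancel hG0 hGT
  have hs1 : ⨆ x, f' x = 1 := by
    rw [hf'def]
    simp only
    rw [← ENNReal.mul_iSup, ← hFdef, ENNReal.inv_mul_cancel hF0 hFT]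
  have hs2 : ⨆ x, g' x = 1 := by
    rw [hg'def]
    simp only
    rw [← ENNReal.mul_iSup, ← hGdef, ENNReal.inv_mul_cancel hG0 hGT]
  have core := dim1_core hp hq hpq f' g' h' (hf.const_mul _) (hg.const_mul _)
    (hh.const_mul _) hyp' hb1 hb2 hs1 hs2
  have main : (∫⁻ x, f' x) ^ p * (∫⁻ x, g' x) ^ q ≤ ∫⁻ x, h' x :=
    le_trans (geom_le_arith _ _ hp hq hpq) core
  rw [hf'def, hg'def, hh'def] at main
  simp only at main
  rw [lintegral_const_mul _ hf, lintegral_const_mul _ hg, lintegral_const_mul _ hh,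
    comp] at main
  exact (ENNReal.mul_le_mul_iff_right (ENNReal.inv_ne_zero.2 hDT) (ENNReal.inv_ne_top.2 hD0)).1 main

lemma trunc_sup {α : Type*} [MeasurableSpace α] {μ : MeasureTheory.Measure α}
    (f : α → ℝ≥0∞) (hf : Measurable f) :
    ∫⁻ x, f x ∂μ = ⨆ n : ℕ, ∫⁻ x, min (f x) n ∂μ := by
  have hmono : ∀ x : α, Monotone fun n : ℕ => min (f x) (n : ℝ≥0∞) := by
    intro x a b hab
    exact min_le_min le_rfl (Nat.cast_le.2 hab)
  have supf : ∀ x : α, ⨆ n : ℕ, min (f x) (n : ℝ≥0∞) = f x := by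
    intro x
    rcases eq_or_ne (f x) ⊤ with hx | hx
    · rw [hx]
      refine le_antisymm (iSup_le fun m => min_le_left _ _) ?_
      calc ⊤ = ⨆ n : ℕ, (n : ℝ≥0∞) := ENNReal.iSup_natCast.symm
        _ ≤ ⨆ n : ℕ, min ⊤ (n : ℝ≥0∞) := by simp
    · obtain ⟨n, hn⟩ := ENNReal.exists_nat_gt hx
      refine le_antisymm (iSup_le fun m => min_le_left _ _) ?_
      exact le_iSup_of_le n (min_eq_left hn.le).ge
  rw [← lintegral_iSup' (fun n => (hf.min measurable_const).aemeasurable)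
    (Filter.Eventually.of_forall hmono)]
  congr 1; funext x; rw [supf x]

lemma dim1_PL {p q : ℝ} (hp : 0 < p) (hq : 0 < q) (hpq : p + q = 1)
    (f g h : ℝ → ℝ≥0∞) (hf : Measurable f) (hg : Measurable g) (hh : Measurable h)
    (hyp : ∀ x y, f x ^ p * g y ^ q ≤ h (p * x + q * y)) :
    (∫⁻ x, f x) ^ p * (∫⁻ x, g x) ^ q ≤ ∫⁻ x, h x := by
  have hmonoP : Monotone fun a : ℝ≥0∞ => a ^ p :=
    fun a b hab => ENNReal.rpow_le_rpow hab hp.le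
  have hmonoQ : Monotone fun a : ℝ≥0∞ => a ^ q :=
    fun a b hab => ENNReal.rpow_le_rpow hab hq.le
  have hbotP : (⊥ : ℝ≥0∞) ^ p = ⊥ := by
    simpa using ENNReal.zero_rpow_of_pos hp
  have hbotQ : (⊥ : ℝ≥0∞) ^ q = ⊥ := by
    simpa using ENNReal.zero_rpow_of_pos hq
  rw [trunc_sup f hf, trunc_sup g hg,
    Monotone.map_iSup_of_continuousAt (ENNReal.continuous_rpow_const.continuousAt) hmonoP hbotP,
    Monotone.map_iSup_of_continuousAt (ENNReal.continuous_rpow_const.continuousAt) hmonoQ hbotQ,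
    ENNReal.iSup_mul]
  refine iSup_le fun i => ?_
  rw [ENNReal.mul_iSup]
  refine iSup_le fun j => ?_
  refine dim1_bounded hp hq hpq _ _ h (hf.min measurable_const) (hg.min measurable_const) hh
    ?_ i j (ENNReal.natCast_ne_top i) (ENNReal.natCast_ne_top j)
    (fun x => min_le_right _ _) (fun x => min_le_right _ _)
  intro x y
  exact le_trans (mul_le_mul' (ENNReal.rpow_le_rpow (min_le_left _ _) hp.le)
    (ENNReal.rpow_le_rpow (min_le_left _ _) hq.le)) (hyp x y)

lemma insertNth_lin {n : ℕ} (a b : ℝ) (u v : ℝ × (Fin n → ℝ)) :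
    (Fin.insertNthEquiv (fun _ : Fin (n+1) => ℝ) 0) (a • u + b • v) =
      a • (Fin.insertNthEquiv (fun _ : Fin (n+1) => ℝ) 0) u
        + b • (Fin.insertNthEquiv (fun _ : Fin (n+1) => ℝ) 0) v := by
  funext j
  simp only [Fin.insertNthEquiv_apply, Pi.add_apply, Pi.smul_apply]
  refine Fin.cases ?_ (fun k => ?_) j
  · simp [Fin.insertNth_apply_same, Prod.fst_add, Prod.smul_fst, smul_eq_mul]
  · rw [← Fin.zero_succAbove k]
    simp [Fin.insertNth_apply_succAbove, Prod.snd_add, Prod.smul_snd, smul_eq_mul]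

theorem PL_pi : ∀ (n : ℕ) {p q : ℝ}, 0 < p → 0 < q → p + q = 1 →
    ∀ (f g h : (Fin n → ℝ) → ℝ≥0∞), Measurable f → Measurable g → Measurable h →
    (∀ x y, f x ^ p * g y ^ q ≤ h (p • x + q • y)) →
    (∫⁻ x, f x) ^ p * (∫⁻ x, g x) ^ q ≤ ∫⁻ x, h x := by
  intro n
  induction n with
  | zero =>
    intro p q hp hq hpq f g h hf hg hh hyp
    have hconst : ∀ (F : (Fin 0 → ℝ) → ℝ≥0∞), ∫⁻ x, F x = F default := by
      intro F
      have : F = fun _ => F default := funext fun x => by rw [Subsingleton.elim x default]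
      rw [this, lintegral_const]
      have : (volume : Measure (Fin 0 → ℝ)) univ = 1 := by
        rw [volume_pi, Measure.pi_univ]
        simp
      rw [this, mul_one]
    rw [hconst f, hconst g, hconst h]
    have := hyp default default
    rwa [Subsingleton.elim (p • default + q • default) default] at this
  | succ n ih =>
    intro p q hp hq hpq f g h hf hg hh hyp
    set e := MeasurableEquiv.piFinSuccAbove (fun _ : Fin (n+1) => ℝ) 0 with he
    have hMP : MeasurePreserving e volume ((volume : Measure ℝ).prod (volume : Measure (Fin n → ℝ))) := by
      simpa only [← volume_pi] using
        measurePreserving_piFinSuccAbove (fun _ : Fin (n+1) => (volume : Measure ℝ)) 0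
    have hMPs : MeasurePreserving e.symm
        ((volume : Measure ℝ).prod (volume : Measure (Fin n → ℝ))) volume :=
      MeasurePreserving.symm e hMP
    have hlin : ∀ (a b : ℝ) (u v : ℝ × (Fin n → ℝ)),
        e.symm (a • u + b • v) = a • e.symm u + b • e.symm v := by
      intro a b u v
      rw [he]
      simp only [MeasurableEquiv.piFinSuccAbove_symm_apply]
      exact insertNth_lin a b u v
    have transfer : ∀ (F : (Fin (n+1) → ℝ) → ℝ≥0∞), Measurable F →
        ∫⁻ x, F x = ∫⁻ x₁ : ℝ, ∫⁻ z : Fin n → ℝ, F (e.symm (x₁, z)) := by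
      intro F hF
      rw [← hMPs.lintegral_comp_emb e.symm.measurableEmbedding F]
      exact lintegral_prod _ ((hF.comp e.symm.measurable).aemeasurable)
    set Ff : ℝ → ℝ≥0∞ := fun x₁ => ∫⁻ z, f (e.symm (x₁, z)) with hFf
    set Gg : ℝ → ℝ≥0∞ := fun y₁ => ∫⁻ w, g (e.symm (y₁, w)) with hGg
    set Hh : ℝ → ℝ≥0∞ := fun t => ∫⁻ z, h (e.symm (t, z)) with hHh
    have hmF : Measurable Ff := by
      apply Measurable.lintegral_prod_right (f := fun x₁ z => f (e.symm (x₁, z)))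
      exact hf.comp (e.symm.measurable.comp measurable_id)
    have hmG : Measurable Gg := by
      apply Measurable.lintegral_prod_right (f := fun x₁ z => g (e.symm (x₁, z)))
      exact hg.comp (e.symm.measurable.comp measurable_id)
    have hmH : Measurable Hh := by
      apply Measurable.lintegral_prod_right (f := fun x₁ z => h (e.symm (x₁, z)))
      exact hh.comp (e.symm.measurable.comp measurable_id)
    have hyp1 : ∀ x₁ y₁ : ℝ, Ff x₁ ^ p * Gg y₁ ^ q ≤ Hh (p * x₁ + q * y₁) := by
      intro x₁ y₁
      refine ih hp hq hpq (fun z => f (e.symm (x₁, z))) (fun w => g (e.symm (y₁, w)))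
        (fun z => h (e.symm (p * x₁ + q * y₁, z)))
        (hf.comp (e.symm.measurable.comp (measurable_prodMk_left)))
        (hg.comp (e.symm.measurable.comp (measurable_prodMk_left)))
        (hh.comp (e.symm.measurable.comp (measurable_prodMk_left))) ?_
      intro z w
      have h2 := hyp (e.symm (x₁, z)) (e.symm (y₁, w))
      rw [← hlin p q (x₁, z) (y₁, w)] at h2
      have hpt : (p • ((x₁, z) : ℝ × (Fin n → ℝ)) + q • (y₁, w))
          = (p * x₁ + q * y₁, p • z + q • w) := by
        simp [Prod.ext_iff, smul_eq_mul]
      rw [hpt] at h2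
      exact h2
    have main := dim1_PL hp hq hpq Ff Gg Hh hmF hmG hmH hyp1
    rw [transfer f hf, transfer g hg, transfer h hh]
    exact main

/-- Multiplicative (dimension-free) form of the Brunn-Minkowski inequality. -/
theorem brunn_minkowski_multiplicative {n : ℕ} (hn : 0 < n)
    (K C : Set (EuclideanSpace ℝ (Fin n)))
    (hKcomp : IsCompact K) (hKconv : Convex ℝ K) (hKint : (interior K).Nonempty)
    (hCcomp : IsCompact C) (hCconv : Convex ℝ C) (hCint : (interior C).Nonempty)
    (lam : ℝ) (hlam : lam ∈ Set.Ioo (0 : ℝ) 1) :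
    (volume ((1 - lam) • K + lam • C)).toReal ≥
      (volume K).toReal ^ (1 - lam) * (volume C).toReal ^ lam := by
  obtain ⟨hl0, hl1⟩ := hlam
  have hp : 0 < 1 - lam := by linarith
  set S : Set (EuclideanSpace ℝ (Fin n)) := (1 - lam) • K + lam • C with hS
  have hScomp : IsCompact S := by
    apply IsCompact.add
    · simpa using hKcomp.image (continuous_const_smul (1 - lam))
    · rw [← Set.image_smul]; exact hCcomp.image (continuous_const_smul lam)
  set e := (MeasurableEquiv.toLp 2 (Fin n → ℝ)).symm with he
  have hMP : MeasurePreserving e volume volume :=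
    EuclideanSpace.volume_preserving_symm_measurableEquiv_toLp (Fin n)
  have hMPs : MeasurePreserving e.symm volume volume := MeasurePreserving.symm e hMP
  -- images
  set K' : Set (Fin n → ℝ) := e '' K with hK'
  set C' : Set (Fin n → ℝ) := e '' C with hC'
  set S' : Set (Fin n → ℝ) := e '' S with hS'
  have himg : ∀ A : Set (EuclideanSpace ℝ (Fin n)), e '' A = e.symm ⁻¹' A := fun A =>
    MeasurableEquiv.image_eq_preimage_symm e A
  have hvol : ∀ (A : Set (EuclideanSpace ℝ (Fin n))), MeasurableSet A →
      volume (e '' A) = volume A := by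
    intro A hA
    rw [himg A]
    exact hMPs.measure_preimage hA.nullMeasurableSet
  have hmK : MeasurableSet K := hKcomp.isClosed.measurableSet
  have hmC : MeasurableSet C := hCcomp.isClosed.measurableSet
  have hmS : MeasurableSet S := hScomp.isClosed.measurableSet
  have hmK' : MeasurableSet K' := by rw [hK', himg]; exact e.symm.measurable hmK
  have hmC' : MeasurableSet C' := by rw [hC', himg]; exact e.symm.measurable hmC
  have hmS' : MeasurableSet S' := by rw [hS', himg]; exact e.symm.measurable hmS
  -- structure of S'
  have hmem : ∀ (x : EuclideanSpace ℝ (Fin n)), x ∈ K → ∀ y, y ∈ C →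
      (1 - lam) • x + lam • y ∈ S := by
    intro x hx y hy
    exact add_mem_add (smul_mem_smul_set hx) (smul_mem_smul_set hy)
  -- the PL application
  set f : (Fin n → ℝ) → ℝ≥0∞ := K'.indicator 1 with hf
  set g : (Fin n → ℝ) → ℝ≥0∞ := C'.indicator 1 with hg
  set h : (Fin n → ℝ) → ℝ≥0∞ := S'.indicator 1 with hh
  have addlin : ∀ (a b : ℝ) (u v : EuclideanSpace ℝ (Fin n)),
      e (a • u + b • v) = a • e u + b • e v := by
    intro a b u v
    rfl
  have hyp : ∀ x y, f x ^ (1 - lam) * g y ^ lam ≤ h ((1 - lam) • x + lam • y) := by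
    intro x y
    by_cases hx : x ∈ K'
    · by_cases hy : y ∈ C'
      · obtain ⟨x0, hx0, rfl⟩ := hx
        obtain ⟨y0, hy0, rfl⟩ := hy
        have hz : (1 - lam) • e x0 + lam • e y0 ∈ S' := by
          rw [← addlin]
          exact ⟨_, hmem x0 hx0 y0 hy0, rfl⟩
        rw [hf, hg, hh, indicator_of_mem (mem_image_of_mem e hx0),
          indicator_of_mem (mem_image_of_mem e hy0), indicator_of_mem hz]
        simp [ENNReal.one_rpow]
      · rw [hg, indicator_of_notMem hy]
        rw [ENNReal.zero_rpow_of_pos hl0, mul_zero]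
        exact zero_le
    · rw [hf, indicator_of_notMem hx]
      rw [ENNReal.zero_rpow_of_pos hp, zero_mul]
      exact zero_le
  have PL := PL_pi n hp hl0 (by ring) f g h
    (measurable_one.indicator hmK') (measurable_one.indicator hmC')
    (measurable_one.indicator hmS') hyp
  rw [hf, hg, hh, lintegral_indicator_one hmK', lintegral_indicator_one hmC',
    lintegral_indicator_one hmS'] at PL
  rw [hK', hC', hS', hvol K hmK, hvol C hmC, hvol S hmS] at PL
  -- toReal
  have hSfin : volume S ≠ ⊤ := hScomp.measure_lt_top.ne
  rw [ge_iff_le, ENNReal.toReal_rpow, ENNReal.toReal_rpow, ← ENNReal.toReal_mul]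
  exact ENNReal.toReal_mono hSfin PL
end

section
/- Minkowski's inequality: for convex bodies K and C in ℝ^n, V(K,C;1)^n ≥ V(K)^(n-1) V(C), where V(K,C;1) = (1/n) lim_{ε→0+}(V(K+εC)-V(K))/ε. -/
open Set MeasureTheory Filter
open scoped Pointwise Topology ENNReal NNReal


lemma bm1_compact {A B : Set ℝ} (hA : IsCompact A) (hB : IsCompact B)
    (hA0 : A.Nonempty) (hB0 : B.Nonempty) :
    volume A + volume B ≤ volume (A + B) := by
  set a₀ := sSup A with ha₀
  set b₀ := sInf B with hb₀
  have haA : a₀ ∈ A := hA.sSup_mem hA0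
  have hbB : b₀ ∈ B := hB.sInf_mem hB0
  set X : Set ℝ := (fun x => x + b₀) '' A with hX
  set Y : Set ℝ := (fun x => x + a₀) '' B with hY
  have hXsub : X ⊆ A + B := by
    rintro _ ⟨x, hx, rfl⟩; exact Set.add_mem_add hx hbB
  have hYsub : Y ⊆ A + B := by
    rintro _ ⟨y, hy, rfl⟩
    have := Set.add_mem_add haA hy
    simpa [add_comm] using this
  have hXle : X ⊆ Iic (a₀ + b₀) := by
    rintro _ ⟨x, hx, rfl⟩
    exact add_le_add_left (le_csSup hA.bddAbove hx) _
  have hYge : Y ⊆ Ici (a₀ + b₀) := by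
    rintro _ ⟨y, hy, rfl⟩
    have : a₀ + b₀ ≤ a₀ + y := add_le_add_right (csInf_le hB.bddBelow hy) _
    simpa [add_comm] using this
  have hXm : MeasurableSet X := (hA.image (continuous_add_right b₀)).measurableSet
  have hYm : MeasurableSet Y := (hB.image (continuous_add_right a₀)).measurableSet
  have hvolX : volume X = volume A := by
    rw [hX, show (fun x : ℝ => x + b₀) '' A = (fun x : ℝ => x + (-b₀)) ⁻¹' A by
      ext z; simp [neg_add_eq_sub, sub_eq_iff_eq_add, eq_comm, add_comm]]
    exact measure_preimage_add_right volume _ _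
  have hvolY : volume Y = volume B := by
    rw [hY, show (fun x : ℝ => x + a₀) '' B = (fun x : ℝ => x + (-a₀)) ⁻¹' B by
      ext z; simp [neg_add_eq_sub, sub_eq_iff_eq_add, eq_comm, add_comm]]
    exact measure_preimage_add_right volume _ _
  have hdisj : Disjoint (X \ {a₀ + b₀}) Y := by
    rw [Set.disjoint_left]
    rintro z ⟨hzX, hz⟩ hzY
    exact hz (le_antisymm (hXle hzX) (hYge hzY))
  calc volume A + volume B = volume (X \ {a₀ + b₀}) + volume Y := by
        rw [measure_diff_null (measure_singleton _), hvolX, hvolY]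
    _ = volume ((X \ {a₀ + b₀}) ∪ Y) := (measure_union hdisj hYm).symm
    _ ≤ volume (A + B) :=
        measure_mono (Set.union_subset (fun z hz => hXsub hz.1) hYsub)

lemma bm1_superadd {A B U : Set ℝ} (hA : MeasurableSet A) (hB : MeasurableSet B)
    (hA0 : A.Nonempty) (hB0 : B.Nonempty) (hU : MeasurableSet U) (hsub : A + B ⊆ U) :
    volume A + volume B ≤ volume U := by
  obtain ⟨a, ha⟩ := hA0
  obtain ⟨b, hb⟩ := hB0
  by_cases hAtop : volume A = ∞
  · refine le_trans le_top ?_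
    have : (fun x => x + b) '' A ⊆ U := by
      rintro _ ⟨x, hx, rfl⟩; exact hsub (Set.add_mem_add hx hb)
    have h2 : volume ((fun x => x + b) '' A) = volume A := by
      rw [show (fun x : ℝ => x + b) '' A = (fun x : ℝ => x + (-b)) ⁻¹' A by
        ext z; simp [neg_add_eq_sub, sub_eq_iff_eq_add, eq_comm, add_comm]]
      exact measure_preimage_add_right volume _ _
    calc (⊤ : ℝ≥0∞) = volume A := hAtop.symm
      _ = volume ((fun x => x + b) '' A) := h2.symm
      _ ≤ volume U := measure_mono this
  by_cases hBtop : volume B = ∞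
  · refine le_trans le_top ?_
    have hs : (fun x => x + a) '' B ⊆ U := by
      rintro _ ⟨x, hx, rfl⟩
      have := Set.add_mem_add ha hx
      exact hsub (by simpa [add_comm] using this)
    have h2 : volume ((fun x => x + a) '' B) = volume B := by
      rw [show (fun x : ℝ => x + a) '' B = (fun x : ℝ => x + (-a)) ⁻¹' B by
        ext z; simp [neg_add_eq_sub, sub_eq_iff_eq_add, eq_comm, add_comm]]
      exact measure_preimage_add_right volume _ _
    calc (⊤ : ℝ≥0∞) = volume B := hBtop.symm
      _ = volume ((fun x => x + a) '' B) := h2.symm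
      _ ≤ volume U := measure_mono hs
  -- both finite
  refine ENNReal.le_of_forall_pos_le_add fun ε hε _ => ?_
  have hε2 : ((ε : ℝ≥0∞) / 2) ≠ 0 := by
    simp [ENNReal.div_eq_zero_iff, (ENNReal.coe_pos.2 hε).ne']
  obtain ⟨KA, hKAsub, hKAc, hKAvol⟩ := hA.exists_isCompact_lt_add hAtop hε2
  obtain ⟨KB, hKBsub, hKBc, hKBvol⟩ := hB.exists_isCompact_lt_add hBtop hε2
  have hKA' : IsCompact (KA ∪ {a}) := hKAc.union isCompact_singleton
  have hKB' : IsCompact (KB ∪ {b}) := hKBc.union isCompact_singleton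
  have hKAsub' : KA ∪ {a} ⊆ A := Set.union_subset hKAsub (by simpa using ha)
  have hKBsub' : KB ∪ {b} ⊆ B := Set.union_subset hKBsub (by simpa using hb)
  have key := bm1_compact hKA' hKB' (by simp) (by simp)
  have hUK : volume (KA ∪ {a} + (KB ∪ {b})) ≤ volume U :=
    measure_mono (subset_trans (Set.add_subset_add hKAsub' hKBsub') hsub)
  calc volume A + volume B
      ≤ (volume (KA ∪ {a}) + ε / 2) + (volume (KB ∪ {b}) + ε / 2) := by
        have h1 : volume A ≤ volume (KA ∪ {a}) + ε / 2 :=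
          le_trans hKAvol.le (add_le_add_left (measure_mono Set.subset_union_left) _)
        have h2 : volume B ≤ volume (KB ∪ {b}) + ε / 2 :=
          le_trans hKBvol.le (add_le_add_left (measure_mono Set.subset_union_left) _)
        exact add_le_add h1 h2
    _ = (volume (KA ∪ {a}) + volume (KB ∪ {b})) + ε := by
        rw [show volume (KA ∪ {a}) + ↑ε / 2 + (volume (KB ∪ {b}) + ↑ε / 2)
            = volume (KA ∪ {a}) + volume (KB ∪ {b}) + (↑ε / 2 + ↑ε / 2) by ring,
          ENNReal.add_halves]
    _ ≤ volume U + ε := by gcongr; exact le_trans key hUK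

lemma ennreal_amgm {t : ℝ} (ht : 0 < t) (ht1 : t < 1) (I J : ℝ≥0∞) :
    I ^ (1 - t) * J ^ t ≤ ENNReal.ofReal (1 - t) * I + ENNReal.ofReal t * J := by
  have h1t : (0:ℝ) < 1 - t := by linarith
  rcases eq_or_ne I 0 with rfl | hI0
  · rw [ENNReal.zero_rpow_of_pos h1t, zero_mul]; exact zero_le
  rcases eq_or_ne J 0 with rfl | hJ0
  · rw [ENNReal.zero_rpow_of_pos ht, mul_zero]; exact zero_le
  rcases eq_or_ne I ∞ with rfl | hItop
  · refine le_trans le_top (le_of_eq ?_)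
    rw [eq_comm, ENNReal.add_eq_top]
    left
    rw [ENNReal.mul_top (by simp [ENNReal.ofReal_eq_zero, not_le.2 h1t])]
  rcases eq_or_ne J ∞ with rfl | hJtop
  · refine le_trans le_top (le_of_eq ?_)
    rw [eq_comm, ENNReal.add_eq_top]
    right
    rw [ENNReal.mul_top (by simp [ENNReal.ofReal_eq_zero, not_le.2 ht])]
  lift I to ℝ≥0 using hItop
  lift J to ℝ≥0 using hJtop
  have key := NNReal.geom_mean_le_arith_mean2_weighted (w₁ := Real.toNNReal (1 - t))
    (w₂ := Real.toNNReal t) (p₁ := I) (p₂ := J) ?_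
  · have e1 : ((Real.toNNReal (1 - t) : ℝ≥0) : ℝ) = 1 - t := Real.coe_toNNReal _ h1t.le
    have e2 : ((Real.toNNReal t : ℝ≥0) : ℝ) = t := Real.coe_toNNReal _ ht.le
    rw [e1, e2] at key
    calc (I : ℝ≥0∞) ^ (1 - t) * (J : ℝ≥0∞) ^ t
        = ((I ^ (1 - t) * J ^ t : ℝ≥0) : ℝ≥0∞) := by
          rw [ENNReal.coe_mul, ENNReal.coe_rpow_of_nonneg _ h1t.le,
            ENNReal.coe_rpow_of_nonneg _ ht.le]
      _ ≤ ((Real.toNNReal (1 - t) * I + Real.toNNReal t * J : ℝ≥0) : ℝ≥0∞) :=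
          ENNReal.coe_le_coe.2 key
      _ = ENNReal.ofReal (1 - t) * I + ENNReal.ofReal t * J := by
          rw [ENNReal.coe_add, ENNReal.coe_mul, ENNReal.coe_mul]; rfl
  · rw [← Real.toNNReal_add h1t.le ht.le]
    norm_num

lemma vol_smul (c : ℝ) (hc : 0 ≤ c) (A : Set ℝ) :
    volume (c • A) = ENNReal.ofReal c * volume A := by
  rw [Measure.addHaar_smul_of_nonneg volume hc A]
  norm_num

-- layercake helper over (0,1) for functions bounded by 1
lemma layer01 {f : ℝ → ℝ≥0∞} (hf : Measurable f) (hf1 : ∀ x, f x ≤ 1) :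
    ∫⁻ x, f x = ∫⁻ s in Ioo (0:ℝ) 1, volume {x | s < (f x).toReal} := by
  have hfin : ∀ x, f x ≠ ∞ := fun x => (lt_of_le_of_lt (hf1 x) (by norm_num)).ne
  have hmbl : Measurable fun x => (f x).toReal := hf.ennreal_toReal
  have h1 : ∫⁻ x, f x = ∫⁻ x, ENNReal.ofReal ((f x).toReal) := by
    congr 1; funext x; rw [ENNReal.ofReal_toReal (hfin x)]
  rw [h1, lintegral_eq_lintegral_meas_lt volume (ae_of_all _ fun x => ENNReal.toReal_nonneg)
    hmbl.aemeasurable]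
  have hsplit : Ioi (0:ℝ) = Ioo 0 1 ∪ Ici 1 := by
    ext s; simp only [mem_Ioi, mem_union, mem_Ioo, mem_Ici]
    constructor
    · intro hs; rcases lt_or_ge s 1 with h | h
      · exact Or.inl ⟨hs, h⟩
      · exact Or.inr h
    · rintro (⟨h, _⟩ | h); exact h; linarith
  rw [hsplit, lintegral_union measurableSet_Ici (by
    rw [Set.disjoint_left]; rintro s ⟨_, h1⟩ h2; simp at h2; linarith)]
  have hzero : ∫⁻ s in Ici (1:ℝ), volume {x | s < (f x).toReal} = 0 := by
    rw [setLIntegral_congr_fun measurableSet_Ici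
      (fun s (hs : 1 ≤ s) => ?_), lintegral_zero]
    have : {x : ℝ | s < (f x).toReal} = ∅ := by
      ext x
      simp only [mem_setOf_eq, mem_empty_iff_false, iff_false, not_lt]
      calc (f x).toReal ≤ (1 : ℝ≥0∞).toReal :=
            ENNReal.toReal_mono (by norm_num) (hf1 x)
        _ ≤ s := by simpa using hs
    rw [this]; exact measure_empty
  rw [hzero, add_zero]

lemma pl_dim1_norm {t : ℝ} (ht : 0 < t) (ht1 : t < 1) {f g h : ℝ → ℝ≥0∞}
    (hf : Measurable f) (hg : Measurable g) (hh : Measurable h)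
    (hf1 : ∀ x, f x ≤ 1) (hg1 : ∀ x, g x ≤ 1) (hh1 : ∀ x, h x ≤ 1)
    (hfsup : ⨆ x, f x = 1) (hgsup : ⨆ x, g x = 1)
    (hyp : ∀ x y, f x ^ (1 - t) * g y ^ t ≤ h ((1 - t) * x + t * y)) :
    (∫⁻ x, f x) ^ (1 - t) * (∫⁻ x, g x) ^ t ≤ ∫⁻ x, h x := by
  have h1t : (0:ℝ) < 1 - t := by linarith
  have hfin : ∀ (φ : ℝ → ℝ≥0∞), (∀ x, φ x ≤ 1) → ∀ x, φ x ≠ ∞ :=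
    fun φ hφ x => (lt_of_le_of_lt (hφ x) (by norm_num)).ne
  -- key level-set inequality
  have key : ∀ s ∈ Ioo (0:ℝ) 1,
      ENNReal.ofReal (1 - t) * volume {x | s < (f x).toReal}
        + ENNReal.ofReal t * volume {x | s < (g x).toReal}
      ≤ volume {x | s < (h x).toReal} := by
    rintro s ⟨hs0, hs1⟩
    set A := {x : ℝ | s < (f x).toReal} with hA
    set B := {x : ℝ | s < (g x).toReal} with hB
    have hAm : MeasurableSet A := measurableSet_lt measurable_const hf.ennreal_toReal
    have hBm : MeasurableSet B := measurableSet_lt measurable_const hg.ennreal_toReal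
    have hUm : MeasurableSet {x : ℝ | s < (h x).toReal} :=
      measurableSet_lt measurable_const hh.ennreal_toReal
    have hA0 : A.Nonempty := by
      have : ENNReal.ofReal s < ⨆ x, f x := by
        rw [hfsup]; exact lt_of_lt_of_le (ENNReal.ofReal_lt_one.2 hs1) le_rfl
      obtain ⟨x, hx⟩ := lt_iSup_iff.1 this
      exact ⟨x, (ENNReal.ofReal_lt_iff_lt_toReal hs0.le (hfin f hf1 x)).1 hx⟩
    have hB0 : B.Nonempty := by
      have : ENNReal.ofReal s < ⨆ x, g x := by
        rw [hgsup]; exact lt_of_lt_of_le (ENNReal.ofReal_lt_one.2 hs1) le_rfl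
      obtain ⟨x, hx⟩ := lt_iSup_iff.1 this
      exact ⟨x, (ENNReal.ofReal_lt_iff_lt_toReal hs0.le (hfin g hg1 x)).1 hx⟩
    have hsub : (1 - t) • A + t • B ⊆ {x : ℝ | s < (h x).toReal} := by
      rintro _ ⟨_, ⟨x, hx, rfl⟩, _, ⟨y, hy, rfl⟩, rfl⟩
      have hfx : ENNReal.ofReal s < f x :=
        (ENNReal.ofReal_lt_iff_lt_toReal hs0.le (hfin f hf1 x)).2 hx
      have hgy : ENNReal.ofReal s < g y :=
        (ENNReal.ofReal_lt_iff_lt_toReal hs0.le (hfin g hg1 y)).2 hy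
      have hlt : ENNReal.ofReal s < f x ^ (1 - t) * g y ^ t := by
        have e : ENNReal.ofReal s
            = ENNReal.ofReal s ^ (1 - t) * ENNReal.ofReal s ^ t := by
          rw [← ENNReal.rpow_add _ _ (by simpa using hs0) ENNReal.ofReal_ne_top]
          norm_num
        rw [e]
        exact ENNReal.mul_lt_mul (ENNReal.rpow_lt_rpow hfx h1t)
          (ENNReal.rpow_lt_rpow hgy ht)
      have := lt_of_lt_of_le hlt (hyp x y)
      exact (ENNReal.ofReal_lt_iff_lt_toReal hs0.le
        (hfin h hh1 ((1 - t) * x + t * y))).1 this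
    calc ENNReal.ofReal (1 - t) * volume A + ENNReal.ofReal t * volume B
        = volume ((1 - t) • A) + volume (t • B) := by
          rw [vol_smul _ h1t.le, vol_smul _ ht.le]
      _ ≤ volume {x : ℝ | s < (h x).toReal} :=
          bm1_superadd (hAm.const_smul₀ (1 - t)) (hBm.const_smul₀ t)
            (hA0.smul_set) (hB0.smul_set) hUm hsub
  -- integrate
  have hmono : ∀ (φ : ℝ → ℝ≥0∞), Measurable fun s : ℝ => volume {x | s < (φ x).toReal} := by
    intro φ
    exact Antitone.measurable fun s s' hss' =>
      measure_mono fun x hx => lt_of_le_of_lt hss' hx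
  calc (∫⁻ x, f x) ^ (1 - t) * (∫⁻ x, g x) ^ t
      ≤ (ENNReal.ofReal (1 - t) * ∫⁻ x, f x) + ENNReal.ofReal t * ∫⁻ x, g x :=
        ennreal_amgm ht ht1 _ _
    _ = ∫⁻ s in Ioo (0:ℝ) 1, (ENNReal.ofReal (1 - t) * volume {x | s < (f x).toReal}
          + ENNReal.ofReal t * volume {x | s < (g x).toReal}) := by
        rw [layer01 hf hf1, layer01 hg hg1, lintegral_add_left ((hmono f).const_mul _),
          lintegral_const_mul _ (hmono f), lintegral_const_mul _ (hmono g)]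
    _ ≤ ∫⁻ s in Ioo (0:ℝ) 1, volume {x | s < (h x).toReal} :=
        setLIntegral_mono (hmono h) key
    _ = ∫⁻ x, h x := (layer01 hh hh1).symm

lemma pl_dim1 {t : ℝ} (ht : 0 < t) (ht1 : t < 1) {f g h : ℝ → ℝ≥0∞}
    (hf : Measurable f) (hg : Measurable g) (hh : Measurable h)
    (hfb : (⨆ x, f x) ≠ ∞) (hgb : (⨆ x, g x) ≠ ∞)
    (hyp : ∀ x y, f x ^ (1 - t) * g y ^ t ≤ h ((1 - t) * x + t * y)) :
    (∫⁻ x, f x) ^ (1 - t) * (∫⁻ x, g x) ^ t ≤ ∫⁻ x, h x := by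
  have h1t : (0:ℝ) < 1 - t := by linarith
  set F := ⨆ x, f x with hF
  set G := ⨆ x, g x with hG
  rcases eq_or_ne F 0 with hF0 | hF0
  · have : ∀ x, f x = 0 := fun x => le_antisymm (hF0 ▸ le_iSup f x) (zero_le)
    rw [show (∫⁻ x, f x) = 0 by simp [this], ENNReal.zero_rpow_of_pos h1t, zero_mul]
    exact zero_le
  rcases eq_or_ne G 0 with hG0 | hG0
  · have : ∀ x, g x = 0 := fun x => le_antisymm (hG0 ▸ le_iSup g x) (zero_le)
    rw [show (∫⁻ x, g x) = 0 by simp [this], ENNReal.zero_rpow_of_pos ht, mul_zero]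
    exact zero_le
  set c := F ^ (1 - t) * G ^ t with hc
  have hc0 : c ≠ 0 := by
    apply mul_ne_zero
    · exact (ENNReal.rpow_pos (lt_of_le_of_ne (zero_le) (Ne.symm hF0)) hfb).ne'
    · exact (ENNReal.rpow_pos (lt_of_le_of_ne (zero_le) (Ne.symm hG0)) hgb).ne'
  have hctop : c ≠ ∞ :=
    ENNReal.mul_ne_top (ENNReal.rpow_ne_top_of_nonneg h1t.le hfb)
      (ENNReal.rpow_ne_top_of_nonneg ht.le hgb)
  set f' := fun x => f x * F⁻¹ with hf'
  set g' := fun x => g x * G⁻¹ with hg'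
  set h' := fun x => min (h x * c⁻¹) 1 with hh'
  have hFF : F * F⁻¹ = 1 := ENNReal.mul_inv_cancel hF0 hfb
  have hGG : G * G⁻¹ = 1 := ENNReal.mul_inv_cancel hG0 hgb
  have hf'1 : ∀ x, f' x ≤ 1 := fun x => by
    rw [hf', ← hFF]; exact mul_le_mul_left (le_iSup f x) _
  have hg'1 : ∀ x, g' x ≤ 1 := fun x => by
    rw [hg', ← hGG]; exact mul_le_mul_left (le_iSup g x) _
  have hf'sup : ⨆ x, f' x = 1 := by
    rw [hf']; simp only [← ENNReal.iSup_mul]; rw [← hF, hFF]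
  have hg'sup : ⨆ x, g' x = 1 := by
    rw [hg']; simp only [← ENNReal.iSup_mul]; rw [← hG, hGG]
  have hkey : ∀ x y, f' x ^ (1 - t) * g' y ^ t
      = f x ^ (1 - t) * g y ^ t * c⁻¹ := by
    intro x y
    rw [hf', hg', ENNReal.mul_rpow_of_nonneg _ _ h1t.le,
      ENNReal.mul_rpow_of_nonneg _ _ ht.le, ENNReal.inv_rpow, ENNReal.inv_rpow, hc,
      ENNReal.mul_inv (Or.inl (ENNReal.rpow_pos (lt_of_le_of_ne (zero_le) (Ne.symm hF0)) hfb).ne')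
        (Or.inl (ENNReal.rpow_ne_top_of_nonneg h1t.le hfb))]
    ring
  have hyp' : ∀ x y, f' x ^ (1 - t) * g' y ^ t ≤ h' ((1 - t) * x + t * y) := by
    intro x y
    rw [hkey]
    refine le_min (mul_le_mul_left (hyp x y) _) ?_
    rw [← hkey]
    exact mul_le_one' (ENNReal.rpow_le_one (hf'1 x) h1t.le)
      (ENNReal.rpow_le_one (hg'1 y) ht.le)
  have main := pl_dim1_norm ht ht1 (hf.mul_const _) (hg.mul_const _)
    (((hh.mul_const _).min measurable_const)) hf'1 hg'1 (fun x => min_le_right _ _)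
    hf'sup hg'sup hyp'
  have hL : ∫⁻ x, f' x = (∫⁻ x, f x) * F⁻¹ := lintegral_mul_const _ hf
  have hR : ∫⁻ x, g' x = (∫⁻ x, g x) * G⁻¹ := lintegral_mul_const _ hg
  have hH : ∫⁻ x, h' x ≤ (∫⁻ x, h x) * c⁻¹ := by
    rw [← lintegral_mul_const _ hh]
    exact lintegral_mono fun x => min_le_left _ _
  have main2 : (∫⁻ x, f x) ^ (1 - t) * (∫⁻ x, g x) ^ t * c⁻¹ ≤ (∫⁻ x, h x) * c⁻¹ := by
    calc (∫⁻ x, f x) ^ (1 - t) * (∫⁻ x, g x) ^ t * c⁻¹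
        = (∫⁻ x, f' x) ^ (1 - t) * (∫⁻ x, g' x) ^ t := by
          rw [hL, hR, ENNReal.mul_rpow_of_nonneg _ _ h1t.le,
            ENNReal.mul_rpow_of_nonneg _ _ ht.le, ENNReal.inv_rpow, ENNReal.inv_rpow, hc,
            ENNReal.mul_inv
              (Or.inl (ENNReal.rpow_pos (lt_of_le_of_ne (zero_le) (Ne.symm hF0)) hfb).ne')
              (Or.inl (ENNReal.rpow_ne_top_of_nonneg h1t.le hfb))]
          ring
      _ ≤ ∫⁻ x, h' x := main
      _ ≤ (∫⁻ x, h x) * c⁻¹ := hH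
  exact (ENNReal.mul_le_mul_iff_left (ENNReal.inv_ne_zero.2 hctop)
    (ENNReal.inv_ne_top.2 hc0)).1 main2

lemma bm_pi : ∀ (n : ℕ) {t : ℝ}, 0 < t → t < 1 → ∀ {K C : Set (Fin n → ℝ)},
    IsCompact K → IsCompact C → K.Nonempty → C.Nonempty →
    volume K ^ (1 - t) * volume C ^ t ≤ volume ((1 - t) • K + t • C) := by
  intro n
  induction n with
  | zero =>
    intro t ht ht1 K C hKc hCc hK0 hC0
    have huniv : ∀ S : Set (Fin 0 → ℝ), S.Nonempty → volume S = 1 := by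
      intro S hS
      obtain ⟨x, hx⟩ := hS
      have : S = univ := by
        ext y; simp only [mem_univ, iff_true]; rwa [Subsingleton.elim y x]
      rw [this]
      rw [volume_pi, Measure.pi_univ]; simp
    rw [huniv K hK0, huniv C hC0,
      huniv _ ((hK0.smul_set).add (hC0.smul_set)), ENNReal.one_rpow, ENNReal.one_rpow,
      one_mul]
  | succ n ih =>
    intro t ht ht1 K C hKc hCc hK0 hC0
    have h1t : (0:ℝ) < 1 - t := by linarith
    set e := MeasurableEquiv.piFinSuccAbove (fun _ : Fin (n + 1) => ℝ) 0 with hedef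
    have he : ∀ x : Fin (n + 1) → ℝ,
        e x = (x 0, fun j => x ((0 : Fin (n + 1)).succAbove j)) := fun _ => rfl
    have hecont : Continuous (⇑e) := by
      rw [show ⇑e = fun x : Fin (n + 1) → ℝ =>
        ((x 0, fun j => x ((0 : Fin (n + 1)).succAbove j)) : ℝ × (Fin n → ℝ)) from rfl]
      exact (continuous_apply 0).prodMk (continuous_pi fun j => continuous_apply _)
    have hadd : ∀ (A B : Set (Fin (n + 1) → ℝ)), e '' (A + B) = e '' A + e '' B := by
      intro A B
      ext z
      constructor
      · rintro ⟨_, ⟨u, hu, v, hv, rfl⟩, rfl⟩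
        exact ⟨e u, mem_image_of_mem _ hu, e v, mem_image_of_mem _ hv, rfl⟩
      · rintro ⟨_, ⟨u, hu, rfl⟩, _, ⟨v, hv, rfl⟩, rfl⟩
        exact ⟨u + v, Set.add_mem_add hu hv, rfl⟩
    have hsmul : ∀ (a : ℝ) (A : Set (Fin (n + 1) → ℝ)), e '' (a • A) = a • (e '' A) := by
      intro a A
      ext z
      constructor
      · rintro ⟨_, ⟨u, hu, rfl⟩, rfl⟩
        exact ⟨e u, mem_image_of_mem _ hu, rfl⟩
      · rintro ⟨_, ⟨u, hu, rfl⟩, rfl⟩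
        exact ⟨a • u, smul_mem_smul_set hu, rfl⟩
    have mp := volume_preserving_piFinSuccAbove (fun _ : Fin (n + 1) => ℝ) 0
    have hvol : ∀ (S : Set (Fin (n + 1) → ℝ)), MeasurableSet (e '' S) →
        volume S = volume (e '' S) := by
      intro S hS
      rw [← mp.measure_preimage hS.nullMeasurableSet, Set.preimage_image_eq S e.injective]
    set K₂ := e '' K with hK₂
    set C₂ := e '' C with hC₂
    set S := (1 - t) • K + t • C with hSdef
    have hScpt : IsCompact S :=
      ((hKc.smul (1 - t)).add (hCc.smul t))
    set S₂ := e '' S with hS₂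
    have hS₂eq : S₂ = (1 - t) • K₂ + t • C₂ := by
      rw [hS₂, hSdef, hadd, hsmul, hsmul]
    have hK₂c : IsCompact K₂ := hKc.image hecont
    have hC₂c : IsCompact C₂ := hCc.image hecont
    have hS₂c : IsCompact S₂ := hScpt.image hecont
    have hK₂m : MeasurableSet K₂ := hK₂c.measurableSet
    have hC₂m : MeasurableSet C₂ := hC₂c.measurableSet
    have hS₂m : MeasurableSet S₂ := hS₂c.measurableSet
    -- slices are compact
    have hslice_cpt : ∀ {T : Set (ℝ × (Fin n → ℝ))}, IsCompact T → ∀ a : ℝ,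
        IsCompact (Prod.mk a ⁻¹' T) := by
      intro T hT a
      have : Prod.mk a ⁻¹' T = Prod.snd '' (T ∩ Prod.fst ⁻¹' {a}) := by
        ext z
        constructor
        · intro hz; exact ⟨(a, z), ⟨hz, rfl⟩, rfl⟩
        · rintro ⟨⟨p, q⟩, ⟨hpq, hp⟩, rfl⟩
          have : p = a := hp
          subst this; exact hpq
      rw [this]
      exact (hT.inter_right (isClosed_singleton.preimage continuous_fst)).image continuous_snd
    set f := fun a : ℝ => volume (Prod.mk a ⁻¹' K₂) with hfdef
    set g := fun b : ℝ => volume (Prod.mk b ⁻¹' C₂) with hgdef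
    set h := fun c : ℝ => volume (Prod.mk c ⁻¹' S₂) with hhdef
    have hfm : Measurable f := measurable_measure_prodMk_left hK₂m
    have hgm : Measurable g := measurable_measure_prodMk_left hC₂m
    have hhm : Measurable h := measurable_measure_prodMk_left hS₂m
    have hbound : ∀ (T : Set (ℝ × (Fin n → ℝ))), IsCompact T →
        (⨆ a : ℝ, volume (Prod.mk a ⁻¹' T)) ≠ ∞ := by
      intro T hT
      refine ne_of_lt (lt_of_le_of_lt (iSup_le fun a => measure_mono ?_)
        (hT.image continuous_snd).measure_lt_top)
      exact fun z hz => ⟨(a, z), hz, rfl⟩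
    have hyp : ∀ a b : ℝ, f a ^ (1 - t) * g b ^ t ≤ h ((1 - t) * a + t * b) := by
      intro a b
      rcases eq_empty_or_nonempty (Prod.mk a ⁻¹' K₂) with hKa | hKa
      · rw [hfdef]
        simp only [hKa, measure_empty]
        rw [ENNReal.zero_rpow_of_pos h1t, zero_mul]
        exact zero_le
      rcases eq_empty_or_nonempty (Prod.mk b ⁻¹' C₂) with hCb | hCb
      · rw [hgdef]
        simp only [hCb, measure_empty]
        rw [ENNReal.zero_rpow_of_pos ht, mul_zero]
        exact zero_le
      have step1 := ih ht ht1 (hslice_cpt hK₂c a) (hslice_cpt hC₂c b) hKa hCb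
      have step2 : (1 - t) • (Prod.mk a ⁻¹' K₂) + t • (Prod.mk b ⁻¹' C₂)
          ⊆ Prod.mk ((1 - t) * a + t * b) ⁻¹' S₂ := by
        rintro _ ⟨_, ⟨u, hu, rfl⟩, _, ⟨v, hv, rfl⟩, rfl⟩
        show ((1 - t) * a + t * b, (1 - t) • u + t • v) ∈ S₂
        rw [hS₂eq]
        exact ⟨(1 - t) • ((a, u) : ℝ × (Fin n → ℝ)), smul_mem_smul_set hu,
          t • ((b, v) : ℝ × (Fin n → ℝ)), smul_mem_smul_set hv, rfl⟩
      exact le_trans step1 (measure_mono step2)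
    have main := pl_dim1 ht ht1 hfm hgm hhm (hbound _ hK₂c) (hbound _ hC₂c) hyp
    have hprodK : volume K = ∫⁻ a, f a := by
      rw [hvol K hK₂m, ← hK₂, Measure.volume_eq_prod, Measure.prod_apply hK₂m]
    have hprodC : volume C = ∫⁻ b, g b := by
      rw [hvol C hC₂m, ← hC₂, Measure.volume_eq_prod, Measure.prod_apply hC₂m]
    have hprodS : volume S = ∫⁻ c, h c := by
      rw [hvol S hS₂m, ← hS₂, Measure.volume_eq_prod, Measure.prod_apply hS₂m]
    rw [hprodK, hprodC, hprodS]
    exact main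

lemma bm_euclidean {n : ℕ} {t : ℝ} (ht : 0 < t) (ht1 : t < 1)
    {K C : Set (EuclideanSpace ℝ (Fin n))} (hKc : IsCompact K) (hCc : IsCompact C)
    (hK0 : K.Nonempty) (hC0 : C.Nonempty) :
    volume K ^ (1 - t) * volume C ^ t ≤ volume ((1 - t) • K + t • C) := by
  set ψ := PiLp.continuousLinearEquiv 2 ℝ (fun _ : Fin n => ℝ) with hψ
  have mp := EuclideanSpace.volume_preserving_symm_measurableEquiv_toLp (Fin n)
  have hcoe : ⇑(MeasurableEquiv.toLp 2 (Fin n → ℝ)).symm = ⇑ψ := rfl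
  have hinj : Function.Injective (⇑ψ) := ψ.injective
  have hvol : ∀ (S : Set (EuclideanSpace ℝ (Fin n))), MeasurableSet (⇑ψ '' S) →
      volume S = volume (⇑ψ '' S) := by
    intro S hS
    rw [← mp.measure_preimage hS.nullMeasurableSet, hcoe, Set.preimage_image_eq S hinj]
  have hadd : ∀ (A B : Set (EuclideanSpace ℝ (Fin n))), ⇑ψ '' (A + B) = ⇑ψ '' A + ⇑ψ '' B := by
    intro A B
    ext z
    constructor
    · rintro ⟨_, ⟨u, hu, v, hv, rfl⟩, rfl⟩
      exact ⟨ψ u, mem_image_of_mem _ hu, ψ v, mem_image_of_mem _ hv, (map_add ψ u v).symm⟩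
    · rintro ⟨_, ⟨u, hu, rfl⟩, _, ⟨v, hv, rfl⟩, rfl⟩
      exact ⟨u + v, Set.add_mem_add hu hv, map_add ψ u v⟩
  have hsmul : ∀ (a : ℝ) (A : Set (EuclideanSpace ℝ (Fin n))), ⇑ψ '' (a • A) = a • (⇑ψ '' A) := by
    intro a A
    ext z
    constructor
    · rintro ⟨_, ⟨u, hu, rfl⟩, rfl⟩
      exact ⟨ψ u, mem_image_of_mem _ hu, (map_smul ψ a u).symm⟩
    · rintro ⟨_, ⟨u, hu, rfl⟩, rfl⟩
      exact ⟨a • u, smul_mem_smul_set hu, map_smul ψ a u⟩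
  have hKcpt : IsCompact (⇑ψ '' K) := hKc.image ψ.continuous
  have hCcpt : IsCompact (⇑ψ '' C) := hCc.image ψ.continuous
  have hScpt : IsCompact (⇑ψ '' ((1 - t) • K + t • C)) :=
    (((hKc.smul (1 - t)).add (hCc.smul t))).image ψ.continuous
  rw [hvol K hKcpt.measurableSet, hvol C hCcpt.measurableSet,
    hvol _ hScpt.measurableSet, hadd, hsmul, hsmul]
  exact bm_pi n ht ht1 hKcpt hCcpt (hK0.image _) (hC0.image _)

/-- Minkowski's first inequality: `V(K,C;1)^n ≥ V(K)^{n-1} V(C)`, where the first mixed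
volume `V(K,C;1)` is given by `(1/n) lim_{ε→0⁺} (V(K+εC)-V(K))/ε`. -/
theorem minkowski_first_inequality {n : ℕ} (hn : 0 < n)
    (K C : Set (EuclideanSpace ℝ (Fin n)))
    (hKcomp : IsCompact K) (hKconv : Convex ℝ K) (hKint : (interior K).Nonempty)
    (hCcomp : IsCompact C) (hCconv : Convex ℝ C) (hCint : (interior C).Nonempty)
    (W : ℝ)
    (hW : Tendsto (fun ε : ℝ => ((volume (K + ε • C)).toReal - (volume K).toReal) / ε)
      (𝓝[>] 0) (𝓝 ((n : ℝ) * W))) :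
    W ^ n ≥ (volume K).toReal ^ (n - 1) * (volume C).toReal := by
  have hK0 : K.Nonempty := hKint.mono interior_subset
  have hC0 : C.Nonempty := hCint.mono interior_subset
  set a := (volume K).toReal with hadef
  set b := (volume C).toReal with hbdef
  have ha : 0 < a :=
    ENNReal.toReal_pos (MeasureTheory.Measure.measure_pos_of_nonempty_interior _ hKint).ne' hKcomp.measure_lt_top.ne
  have hb : 0 < b :=
    ENNReal.toReal_pos (MeasureTheory.Measure.measure_pos_of_nonempty_interior _ hCint).ne' hCcomp.measure_lt_top.ne
  have hnR : (0:ℝ) < (n:ℝ) := by exact_mod_cast hn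
  set α := a ^ ((n:ℝ))⁻¹ with hαdef
  set β := b ^ ((n:ℝ))⁻¹ with hβdef
  have hα : 0 < α := Real.rpow_pos_of_pos ha _
  have hβ : 0 < β := Real.rpow_pos_of_pos hb _
  have hαn : α ^ n = a := by
    rw [hαdef, ← Real.rpow_natCast (a ^ ((n:ℝ))⁻¹) n, ← Real.rpow_mul ha.le,
      inv_mul_cancel₀ hnR.ne', Real.rpow_one]
  have hβn : β ^ n = b := by
    rw [hβdef, ← Real.rpow_natCast (b ^ ((n:ℝ))⁻¹) n, ← Real.rpow_mul hb.le,
      inv_mul_cancel₀ hnR.ne', Real.rpow_one]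
  have hfr : Module.finrank ℝ (EuclideanSpace ℝ (Fin n)) = n := finrank_euclideanSpace_fin
  -- key pointwise bound
  have key : ∀ ε : ℝ, 0 < ε → (α + ε * β) ^ n ≤ (volume (K + ε • C)).toReal := by
    intro ε hε
    have hd : 0 < α + ε * β := by positivity
    set t := ε * β / (α + ε * β) with htdef
    have ht : 0 < t := div_pos (by positivity) hd
    have ht1 : t < 1 := (div_lt_one hd).2 (by linarith)
    have h1t : 1 - t = α / (α + ε * β) := by
      rw [htdef]; field_simp; ring
    have h1tpos : 0 < 1 - t := by linarith
    set Kt := (1 - t)⁻¹ • K with hKt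
    set Ct := (ε / t) • C with hCt
    have hcomb : (1 - t) • Kt + t • Ct = K + ε • C := by
      rw [hKt, hCt, smul_smul, smul_smul, mul_inv_cancel₀ h1tpos.ne', one_smul,
        mul_div_cancel₀ _ ht.ne']
    have bm := bm_euclidean ht ht1 (hKcomp.smul ((1 - t)⁻¹ : ℝ)) (hCcomp.smul (ε / t))
      (hK0.smul_set) (hC0.smul_set)
    rw [hcomb] at bm
    have hvolKt : volume Kt = ENNReal.ofReal ((1 - t)⁻¹ ^ n) * volume K := by
      rw [hKt, Measure.addHaar_smul_of_nonneg volume (by positivity) K, hfr]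
    have hvolCt : volume Ct = ENNReal.ofReal ((ε / t) ^ n) * volume C := by
      rw [hCt, Measure.addHaar_smul_of_nonneg volume (by positivity) C, hfr]
    have hfin : volume (K + ε • C) ≠ ∞ :=
      (hKcomp.add (hCcomp.smul ε)).measure_lt_top.ne
    have breal := ENNReal.toReal_mono hfin bm
    rw [ENNReal.toReal_mul, ← ENNReal.toReal_rpow, ← ENNReal.toReal_rpow,
      hvolKt, hvolCt, ENNReal.toReal_mul, ENNReal.toReal_mul,
      ENNReal.toReal_ofReal (by positivity), ENNReal.toReal_ofReal (by positivity)]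
      at breal
    have e1 : (1 - t)⁻¹ ^ n * (volume K).toReal = (α + ε * β) ^ n := by
      rw [h1t, ← hadef, ← hαn, inv_div, div_pow, div_mul_cancel₀]
      exact (pow_pos hα n).ne'
    have e2 : (ε / t) ^ n * (volume C).toReal = (α + ε * β) ^ n := by
      have : ε / t = (α + ε * β) / β := by
        rw [htdef]; field_simp
      rw [this, ← hbdef, ← hβn, div_pow, div_mul_cancel₀]
      exact (pow_pos hβ n).ne'
    rw [e1, e2] at breal
    have hxpos : (0:ℝ) < (α + ε * β) ^ n := pow_pos hd n
    calc (α + ε * β) ^ n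
        = ((α + ε * β) ^ n) ^ (1 - t) * ((α + ε * β) ^ n) ^ t := by
          rw [← Real.rpow_add hxpos, sub_add_cancel, Real.rpow_one]
      _ ≤ (volume (K + ε • C)).toReal := breal
  -- derivative of ε ↦ (α + ε β)^n at 0
  have hder : HasDerivAt (fun ε : ℝ => (α + ε * β) ^ n)
      ((n : ℝ) * α ^ (n - 1) * β) 0 := by
    have h1 : HasDerivAt (fun ε : ℝ => α + ε * β) β 0 :=
      (hasDerivAt_mul_const β).const_add α
    have := h1.pow n
    simpa [Pi.pow_def] using this
  have hslope : Tendsto (fun ε : ℝ => ((α + ε * β) ^ n - α ^ n) / ε) (𝓝[>] 0)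
      (𝓝 ((n : ℝ) * α ^ (n - 1) * β)) := by
    have h2 := hasDerivAt_iff_tendsto_slope.1 hder
    have h3 : Tendsto (slope (fun ε : ℝ => (α + ε * β) ^ n) 0) (𝓝[>] 0)
        (𝓝 ((n : ℝ) * α ^ (n - 1) * β)) :=
      h2.mono_left (nhdsWithin_mono 0 (fun x hx => ne_of_gt hx))
    refine h3.congr fun ε => ?_
    rw [slope_def_field]
    norm_num
  have hcomp : (n : ℝ) * α ^ (n - 1) * β ≤ (n : ℝ) * W := by
    refine le_of_tendsto_of_tendsto hslope hW ?_
    filter_upwards [self_mem_nhdsWithin] with ε (hε : 0 < ε)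
    have h1 := key ε hε
    have h2 : (α + ε * β) ^ n - α ^ n ≤ (volume (K + ε • C)).toReal - a := by
      rw [hαn]; exact sub_le_sub_right h1 _
    exact div_le_div_of_nonneg_right h2 hε.le
  have hW' : α ^ (n - 1) * β ≤ W := by
    rw [mul_assoc] at hcomp
    exact (mul_le_mul_iff_right₀ hnR).1 hcomp
  have hnn : (0:ℝ) ≤ α ^ (n - 1) * β := by positivity
  have hfinal := pow_le_pow_left₀ hnn hW' n
  refine le_trans (le_of_eq ?_) hfinal
  rw [mul_pow, ← pow_mul, mul_comm (n-1) n, pow_mul, hαn, hβn]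
end
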